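/- arXiv:1710.00250 — 2 statements merged into one kernel-verified Lean document; each statement's English description precedes it below -/
import Mathlib

section
/- For all x ∈ ℝ, the Hilbert transform of the function t ↦ 2t/(t²+1) satisfies H₀(2t/(t²+1))(x) = -2/(x²+1). Equivalently, the derivative of the modified Hilbert transform of f(x) = log(x²+1) equals -2/(x²+1). -/
open MeasureTheory Filter

section HilbertAux
open Set Real

noncomputable def hilbG (x t : ℝ) : ℝ :=
  (2 * x / (x ^ 2 + 1)) * Real.log t - (x / (x ^ 2 + 1)) * Real.log ((t - x) ^ 2 + 1)
    - (2 / (x ^ 2 + 1)) * Real.arctan (t - x)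

lemma hilbG_hasDerivAt (x t : ℝ) (ht : t ≠ 0) :
    HasDerivAt (hilbG x) ((2 * (x - t) / ((x - t) ^ 2 + 1)) / t) t := by
  have h1 : (0:ℝ) < (t - x) ^ 2 + 1 := by positivity
  have hx1 : (0:ℝ) < x ^ 2 + 1 := by positivity
  have hu : HasDerivAt (fun s : ℝ => (s - x) ^ 2 + 1) (2 * (t - x)) t := by
    have := (((hasDerivAt_id t).sub_const x).pow 2).add_const 1
    simpa using this
  have hlog1 : HasDerivAt (fun s : ℝ => Real.log s) t⁻¹ t := Real.hasDerivAt_log ht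
  have hlog2 : HasDerivAt (fun s : ℝ => Real.log ((s - x) ^ 2 + 1))
      ((2 * (t - x)) / ((t - x) ^ 2 + 1)) t := hu.log h1.ne'
  have harc : HasDerivAt (fun s : ℝ => Real.arctan (s - x)) (1 / (1 + (t - x) ^ 2)) t := by
    have := ((hasDerivAt_id t).sub_const x).arctan
    simpa using this
  have H := ((hlog1.const_mul (2 * x / (x ^ 2 + 1))).sub
      (hlog2.const_mul (x / (x ^ 2 + 1)))).sub (harc.const_mul (2 / (x ^ 2 + 1)))
  refine H.congr_deriv ?_
  field_simp
  ring

lemma hilb_ratio_eq (x t : ℝ) (ht : t ≠ 0) :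
    t ^ 2 / ((t - x) ^ 2 + 1) = ((1 - x * t⁻¹) ^ 2 + (t⁻¹) ^ 2)⁻¹ := by
  have h1 : (0:ℝ) < (t - x) ^ 2 + 1 := by positivity
  rw [eq_comm, inv_eq_iff_eq_inv, eq_comm, inv_div]
  field_simp

lemma hilb_log_part_eq (x t : ℝ) (ht : t ≠ 0) :
    (x / (x ^ 2 + 1)) * Real.log (t ^ 2 / ((t - x) ^ 2 + 1))
      = (2 * x / (x ^ 2 + 1)) * Real.log t - (x / (x ^ 2 + 1)) * Real.log ((t - x) ^ 2 + 1) := by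
  have h1 : (0:ℝ) < (t - x) ^ 2 + 1 := by positivity
  rw [Real.log_div (pow_ne_zero 2 ht) h1.ne', Real.log_pow]
  push_cast
  ring

lemma hilb_ratio_tendsto (x : ℝ) (l : Filter ℝ) (hinv : Tendsto (fun t : ℝ => t⁻¹) l (nhds 0))
    (hne : ∀ᶠ t in l, t ≠ 0) :
    Tendsto (fun t : ℝ => t ^ 2 / ((t - x) ^ 2 + 1)) l (nhds 1) := by
  have hx : Tendsto (fun t : ℝ => x * t⁻¹) l (nhds 0) := by
    simpa using (hinv.const_mul x)
  have h : Tendsto (fun t : ℝ => ((1 - x * t⁻¹) ^ 2 + (t⁻¹) ^ 2)⁻¹) l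
      (nhds ((((1:ℝ) - 0) ^ 2 + 0 ^ 2)⁻¹)) :=
    Tendsto.inv₀ (((tendsto_const_nhds.sub hx).pow 2).add (hinv.pow 2)) (by norm_num)
  have h1 : ((((1:ℝ) - 0) ^ 2 + 0 ^ 2)⁻¹ : ℝ) = 1 := by norm_num
  rw [h1] at h
  apply Tendsto.congr' _ h
  filter_upwards [hne] with t ht
  exact (hilb_ratio_eq x t ht).symm

lemma hilbG_tendsto_atTop (x : ℝ) :
    Tendsto (hilbG x) atTop (nhds (-(2 / (x ^ 2 + 1)) * (Real.pi / 2))) := by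
  have hratio := hilb_ratio_tendsto x atTop tendsto_inv_atTop_zero (eventually_ne_atTop 0)
  have hlog : Tendsto (fun t : ℝ => (x / (x ^ 2 + 1)) * Real.log (t ^ 2 / ((t - x) ^ 2 + 1)))
      atTop (nhds 0) := by
    have := ((Real.continuousAt_log one_ne_zero).tendsto.comp hratio).const_mul (x / (x ^ 2 + 1))
    simpa using this
  have harc : Tendsto (fun t : ℝ => Real.arctan (t - x)) atTop (nhds (Real.pi / 2)) := by
    have := (tendsto_nhds_of_tendsto_nhdsWithin Real.tendsto_arctan_atTop).comp
      (tendsto_atTop_add_const_right atTop (-x) tendsto_id)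
    simpa [sub_eq_add_neg, Function.comp_def] using this
  have H := hlog.sub (harc.const_mul (2 / (x ^ 2 + 1)))
  rw [zero_sub] at H
  apply Tendsto.congr' _ (by simpa [neg_mul] using H)
  filter_upwards [eventually_ne_atTop (0:ℝ)] with t ht
  rw [hilbG, ← hilb_log_part_eq x t ht]

lemma hilbG_tendsto_atBot (x : ℝ) :
    Tendsto (hilbG x) atBot (nhds ((2 / (x ^ 2 + 1)) * (Real.pi / 2))) := by
  have hinv : Tendsto (fun t : ℝ => t⁻¹) atBot (nhds 0) := by
    have h0 := ((tendsto_inv_atTop_zero : Tendsto (fun r : ℝ => r⁻¹) atTop (nhds 0)).comp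
      (tendsto_neg_atBot_atTop : Tendsto (fun r : ℝ => -r) atBot atTop)).neg
    rw [neg_zero] at h0
    refine h0.congr fun t => ?_
    simp [Function.comp, inv_neg]
  have hratio := hilb_ratio_tendsto x atBot hinv (eventually_ne_atBot 0)
  have hlog : Tendsto (fun t : ℝ => (x / (x ^ 2 + 1)) * Real.log (t ^ 2 / ((t - x) ^ 2 + 1)))
      atBot (nhds 0) := by
    have := ((Real.continuousAt_log one_ne_zero).tendsto.comp hratio).const_mul (x / (x ^ 2 + 1))
    simpa using this
  have harc : Tendsto (fun t : ℝ => Real.arctan (t - x)) atBot (nhds (-(Real.pi / 2))) := by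
    have := (tendsto_nhds_of_tendsto_nhdsWithin Real.tendsto_arctan_atBot).comp
      (tendsto_atBot_add_const_right atBot (-x) tendsto_id)
    simpa [sub_eq_add_neg, Function.comp_def] using this
  have H := hlog.sub (harc.const_mul (2 / (x ^ 2 + 1)))
  rw [zero_sub] at H
  apply Tendsto.congr' _ (by simpa [neg_mul, mul_neg, neg_neg] using H)
  filter_upwards [eventually_ne_atBot (0:ℝ)] with t ht
  rw [hilbG, ← hilb_log_part_eq x t ht]

lemma hilb_bound (x t : ℝ) :
    ‖2 * (x - t) / ((x - t) ^ 2 + 1) / t‖ ≤ (2 + |x|) * (t ^ 2)⁻¹ := by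
  rcases eq_or_ne t 0 with rfl | ht
  · simp
  have h1 : (0:ℝ) < (x - t) ^ 2 + 1 := by positivity
  have ht2 : (0:ℝ) < t ^ 2 := by positivity
  have e : 2 * (x - t) / ((x - t) ^ 2 + 1) / t * t ^ 2 = 2 * (x - t) * t / ((x - t) ^ 2 + 1) := by
    field_simp
  have key : |2 * (x - t) / ((x - t) ^ 2 + 1) / t| * t ^ 2 ≤ 2 + |x| := by
    rw [← abs_of_pos ht2, ← abs_mul, e, abs_div, abs_of_pos h1,
      div_le_iff₀ h1]
    have htle : |t| ≤ |x - t| + |x| := by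
      have := abs_add_le (t - x) x
      simpa [abs_sub_comm t x] using this
    have habs : |2 * (x - t) * t| ≤ 2 * |x - t| * (|x - t| + |x|) := by
      rw [abs_mul, abs_mul, abs_two]
      exact mul_le_mul_of_nonneg_left htle (by positivity)
    refine habs.trans ?_
    have hsq : |x - t| ^ 2 = (x - t) ^ 2 := sq_abs _
    nlinarith [sq_nonneg (|x - t| - 1), abs_nonneg x, abs_nonneg (x - t),
      mul_nonneg (abs_nonneg x) (sq_nonneg (|x - t| - 1))]
  calc ‖2 * (x - t) / ((x - t) ^ 2 + 1) / t‖
      = |2 * (x - t) / ((x - t) ^ 2 + 1) / t| * t ^ 2 * (t ^ 2)⁻¹ := by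
        rw [Real.norm_eq_abs]; field_simp
    _ ≤ (2 + |x|) * (t ^ 2)⁻¹ := mul_le_mul_of_nonneg_right key (by positivity)

lemma hilb_bound_integrable_Ioi (x ε : ℝ) (hε : 0 < ε) :
    IntegrableOn (fun t : ℝ => (2 + |x|) * (t ^ 2)⁻¹) (Ioi ε) := by
  have h := (integrableOn_Ioi_rpow_of_lt (show (-2:ℝ) < -1 by norm_num) hε).const_mul (2 + |x|)
  refine IntegrableOn.congr_fun h (fun t htm => ?_) measurableSet_Ioi
  have htpos : (0:ℝ) < t := hε.trans htm
  rw [Real.rpow_neg htpos.le]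
  norm_num [Real.rpow_natCast]

lemma hilb_bound_integrable_Iio (x ε : ℝ) (hε : 0 < ε) :
    IntegrableOn (fun t : ℝ => (2 + |x|) * (t ^ 2)⁻¹) (Iio (-ε)) := by
  rw [← (Measure.measurePreserving_neg (volume : Measure ℝ)).integrableOn_comp_preimage
      (Homeomorph.neg ℝ).measurableEmbedding]
  simp only [Function.comp_def, neg_sq, neg_preimage, neg_Iio, neg_neg]
  exact hilb_bound_integrable_Ioi x ε hε

lemma hilb_continuousOn (x : ℝ) :
    ContinuousOn (fun t : ℝ => 2 * (x - t) / ((x - t) ^ 2 + 1) / t) {t : ℝ | t ≠ 0} := by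
  apply ContinuousOn.div
  · exact ContinuousOn.div (by fun_prop) (by fun_prop) (fun t _ => by positivity)
  · exact continuousOn_id
  · exact fun t ht => ht

lemma hilb_integrableOn_Ioi (x ε : ℝ) (hε : 0 < ε) :
    IntegrableOn (fun t : ℝ => 2 * (x - t) / ((x - t) ^ 2 + 1) / t) (Ioi ε) := by
  refine Integrable.mono' (hilb_bound_integrable_Ioi x ε hε) ?_ (ae_of_all _ fun t => hilb_bound x t)
  exact ((hilb_continuousOn x).mono (fun t ht => ne_of_gt (hε.trans ht))).aestronglyMeasurable
    measurableSet_Ioi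

lemma hilb_integrableOn_Iic (x ε : ℝ) (hε : 0 < ε) :
    IntegrableOn (fun t : ℝ => 2 * (x - t) / ((x - t) ^ 2 + 1) / t) (Iic (-ε)) := by
  rw [integrableOn_Iic_iff_integrableOn_Iio]
  refine Integrable.mono' (hilb_bound_integrable_Iio x ε hε) ?_ (ae_of_all _ fun t => hilb_bound x t)
  exact ((hilb_continuousOn x).mono (fun t ht => ne_of_lt (lt_trans ht (neg_neg_iff_pos.mpr hε)))).aestronglyMeasurable
    measurableSet_Iio

lemma hilb_integral_eq (x ε : ℝ) (hε : 0 < ε) :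
    ∫ t in {t : ℝ | ε ≤ |t|}, 2 * (x - t) / ((x - t) ^ 2 + 1) / t
      = hilbG x (-ε) - hilbG x ε - (2 / (x ^ 2 + 1)) * Real.pi := by
  have hεne : ε ≠ 0 := hε.ne'
  have hnegε : -ε < 0 := neg_neg_iff_pos.mpr hε
  have hset : {t : ℝ | ε ≤ |t|} = Iic (-ε) ∪ Ici ε := by
    ext t
    simp only [mem_setOf_eq, le_abs, mem_union, mem_Iic, mem_Ici, le_neg]
    tauto
  have hIoi : ∫ t in Ioi ε, 2 * (x - t) / ((x - t) ^ 2 + 1) / t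
      = (-(2 / (x ^ 2 + 1)) * (Real.pi / 2)) - hilbG x ε := by
    refine integral_Ioi_of_hasDerivAt_of_tendsto
      ((hilbG_hasDerivAt x ε hεne).continuousAt.continuousWithinAt)
      (fun t ht => hilbG_hasDerivAt x t (ne_of_gt (hε.trans ht)))
      (hilb_integrableOn_Ioi x ε hε) (hilbG_tendsto_atTop x)
  have hIic : ∫ t in Iic (-ε), 2 * (x - t) / ((x - t) ^ 2 + 1) / t
      = hilbG x (-ε) - (2 / (x ^ 2 + 1)) * (Real.pi / 2) := by
    refine integral_Iic_of_hasDerivAt_of_tendsto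
      ((hilbG_hasDerivAt x (-ε) hnegε.ne).continuousAt.continuousWithinAt)
      (fun t ht => hilbG_hasDerivAt x t (ne_of_lt (lt_trans ht hnegε)))
      (hilb_integrableOn_Iic x ε hε) (hilbG_tendsto_atBot x)
  rw [hset, setIntegral_union (Iic_disjoint_Ici.mpr (by simp [hε.le]; linarith)) measurableSet_Ici
    (hilb_integrableOn_Iic x ε hε)
    ((integrableOn_Ici_iff_integrableOn_Ioi).mpr (hilb_integrableOn_Ioi x ε hε)),
    integral_Ici_eq_integral_Ioi, hIoi, hIic]
  ring

end HilbertAux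

open Set Real in
/-- The Hilbert transform of `t ↦ 2t/(t²+1)` equals `x ↦ -2/(x²+1)`: for every `x`,
the principal value `(1/π) lim_{ε→0⁺} ∫_{|t|≥ε} f(x-t)/t dt` exists and equals `-2/(x²+1)`.
Equivalently, the derivative of the modified Hilbert transform of `log(x²+1)` is `-2/(x²+1)`. -/
theorem hilbert_of_log_deriv (x : ℝ) :
    Tendsto
      (fun ε : ℝ =>
        (1 / Real.pi) * ∫ t in {t : ℝ | ε ≤ |t|}, (2 * (x - t) / ((x - t) ^ 2 + 1)) / t)
      (nhdsWithin 0 (Set.Ioi 0)) (nhds (-2 / (x ^ 2 + 1))) := by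
  set φ : ℝ → ℝ := fun ε =>
    -(x / (x ^ 2 + 1)) * (Real.log ((-ε - x) ^ 2 + 1) - Real.log ((ε - x) ^ 2 + 1))
      - (2 / (x ^ 2 + 1)) * (Real.arctan (-ε - x) - Real.arctan (ε - x))
      - (2 / (x ^ 2 + 1)) * Real.pi with hφ
  have hφeq : ∀ ε : ℝ, hilbG x (-ε) - hilbG x ε - (2 / (x ^ 2 + 1)) * Real.pi = φ ε := by
    intro ε
    simp only [hφ, hilbG]
    rw [Real.log_neg_eq_log]
    ring
  have hcont : ContinuousAt φ 0 := by
    have hl1 : ContinuousAt (fun ε : ℝ => Real.log ((-ε - x) ^ 2 + 1)) 0 := by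
      refine (Real.continuousAt_log (by positivity)).comp (by fun_prop)
    have hl2 : ContinuousAt (fun ε : ℝ => Real.log ((ε - x) ^ 2 + 1)) 0 := by
      refine (Real.continuousAt_log (by positivity)).comp (by fun_prop)
    have ha1 : ContinuousAt (fun ε : ℝ => Real.arctan (-ε - x)) 0 :=
      (Real.continuous_arctan.comp ((continuous_neg).sub continuous_const)).continuousAt
    have ha2 : ContinuousAt (fun ε : ℝ => Real.arctan (ε - x)) 0 :=
      (Real.continuous_arctan.comp ((continuous_id).sub continuous_const)).continuousAt
    exact (((hl1.sub hl2).const_mul _).sub ((ha1.sub ha2).const_mul _)).sub continuousAt_const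
  have hφ0 : φ 0 = -(2 / (x ^ 2 + 1)) * Real.pi := by
    simp [hφ]
  have hlim : Tendsto (fun ε : ℝ => (1 / Real.pi) * φ ε) (nhdsWithin 0 (Set.Ioi 0))
      (nhds (-2 / (x ^ 2 + 1))) := by
    have h := Tendsto.const_mul (1 / Real.pi)
      (hcont.tendsto.mono_left (nhdsWithin_le_nhds (s := Set.Ioi 0)))
    rw [hφ0] at h
    convert h using 2
    have hpi := Real.pi_ne_zero
    field_simp
  refine Tendsto.congr' ?_ hlim
  filter_upwards [self_mem_nhdsWithin] with ε hε
  rw [hilb_integral_eq x ε hε, hφeq]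
end

section
/- Let f(x) = ⟨x⟩^{1/2} = (1+x²)^{1/4}, so that f'(x) = (1/2) x ⟨x⟩^{-3/2}. Then the Hilbert transform of f' satisfies the uniform bound ‖H₀(f')‖_{L^∞(ℝ)} ≤ 20. -/
open MeasureTheory Filter

section HilbertAux

open Set


noncomputable def hphi (u : ℝ) : ℝ := 1 / 2 * u * (1 + u ^ 2) ^ (-(3 / 4) : ℝ)

lemma one_add_sq_pos (u : ℝ) : (0:ℝ) < 1 + u ^ 2 := by positivity

lemma hphi_cont : Continuous hphi := by
  apply Continuous.mul (by continuity)
  apply Continuous.rpow_const (by continuity)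
  exact fun u => Or.inl (one_add_sq_pos u).ne'

lemma hphi_odd (u : ℝ) : hphi (-u) = -hphi u := by
  simp only [hphi, neg_sq]
  ring

lemma hphi_abs_le_half (u : ℝ) : |hphi u| ≤ 1 / 2 := by
  have h1 : |hphi u| = 1 / 2 * |u| * (1 + u ^ 2) ^ (-(3 / 4) : ℝ) := by
    rw [hphi, abs_mul, abs_mul]
    rw [abs_of_pos (Real.rpow_pos_of_pos (one_add_sq_pos u) _)]
    norm_num
  have h2 : |u| ≤ (1 + u ^ 2) ^ ((1:ℝ) / 2) := by
    rw [← Real.sqrt_eq_rpow, ← Real.sqrt_sq_eq_abs]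
    exact Real.sqrt_le_sqrt (by nlinarith)
  have h3 : (1 + u ^ 2) ^ ((1:ℝ)/2) * (1 + u ^ 2) ^ (-(3/4) : ℝ) = (1 + u^2) ^ (-(1/4) : ℝ) := by
    rw [← Real.rpow_add (one_add_sq_pos u)]; norm_num
  have h4 : (1 + u^2) ^ (-(1/4) : ℝ) ≤ 1 :=
    Real.rpow_le_one_of_one_le_of_nonpos (by nlinarith) (by norm_num)
  have h5 : (0:ℝ) < (1 + u ^ 2) ^ (-(3 / 4) : ℝ) := Real.rpow_pos_of_pos (one_add_sq_pos u) _
  calc |hphi u| = 1/2 * (|u| * (1 + u^2) ^ (-(3/4):ℝ)) := by rw [h1]; ring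
    _ ≤ 1/2 * ((1 + u ^ 2) ^ ((1:ℝ)/2) * (1 + u^2) ^ (-(3/4):ℝ)) := by
        apply mul_le_mul_of_nonneg_left _ (by norm_num)
        exact mul_le_mul_of_nonneg_right h2 h5.le
    _ = 1/2 * (1 + u^2) ^ (-(1/4) : ℝ) := by rw [h3]
    _ ≤ 1/2 := by nlinarith

lemma hphi_abs_le_rpow {u v : ℝ} (hv : 0 < v) (hvu : v ≤ |u|) :
    |hphi u| ≤ 1 / 2 * v ^ (-(1/2) : ℝ) := by
  have hu : 0 < |u| := lt_of_lt_of_le hv hvu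
  have h1 : |hphi u| = 1 / 2 * |u| * (1 + u ^ 2) ^ (-(3 / 4) : ℝ) := by
    rw [hphi, abs_mul, abs_mul]
    rw [abs_of_pos (Real.rpow_pos_of_pos (one_add_sq_pos u) _)]
    norm_num
  have h2 : (1 + u ^ 2) ^ (-(3/4) : ℝ) ≤ (|u| ^ 2) ^ (-(3/4) : ℝ) := by
    apply Real.rpow_le_rpow_of_nonpos (by positivity) (by rw [sq_abs]; nlinarith) (by norm_num)
  have h3 : (|u| ^ 2) ^ (-(3/4) : ℝ) = |u| ^ (-(3/2) : ℝ) := by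
    rw [← Real.rpow_natCast |u| 2, ← Real.rpow_mul (abs_nonneg u)]
    norm_num
  have h4 : |u| * |u| ^ (-(3/2) : ℝ) = |u| ^ (-(1/2) : ℝ) := by
    nth_rewrite 1 [← Real.rpow_one |u|]
    rw [← Real.rpow_add hu]; norm_num
  have h5 : |u| ^ (-(1/2) : ℝ) ≤ v ^ (-(1/2) : ℝ) :=
    Real.rpow_le_rpow_of_nonpos hv hvu (by norm_num)
  calc |hphi u| = 1/2 * (|u| * (1 + u ^ 2) ^ (-(3/4):ℝ)) := by rw [h1]; ring
    _ ≤ 1/2 * (|u| * (|u| ^ 2) ^ (-(3/4) : ℝ)) := by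
        apply mul_le_mul_of_nonneg_left _ (by norm_num)
        exact mul_le_mul_of_nonneg_left h2 (abs_nonneg u)
    _ = 1/2 * |u| ^ (-(1/2) : ℝ) := by rw [h3, h4]
    _ ≤ 1/2 * v ^ (-(1/2) : ℝ) := by
        apply mul_le_mul_of_nonneg_left h5 (by norm_num)

lemma half_rpow_half (t : ℝ) (ht : 0 < t) :
    1 / 2 * (t / 2) ^ (-(1/2) : ℝ) ≤ t ^ (-(1/2) : ℝ) := by
  rw [Real.div_rpow ht.le (by norm_num : (0:ℝ) ≤ 2)]
  have h2 : (2:ℝ) ^ (-(1/2) : ℝ) = ((2:ℝ) ^ ((1:ℝ)/2))⁻¹ := by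
    rw [← Real.rpow_neg (by norm_num : (0:ℝ) ≤ 2)]
  have h3 : (0:ℝ) < (2:ℝ) ^ ((1:ℝ)/2) := Real.rpow_pos_of_pos two_pos _
  have h4 : (2:ℝ) ^ ((1:ℝ)/2) ≤ 2 := by
    calc (2:ℝ) ^ ((1:ℝ)/2) ≤ 2 ^ (1:ℝ) :=
          Real.rpow_le_rpow_of_exponent_le one_le_two (by norm_num)
      _ = 2 := Real.rpow_one 2
  have h5 : (0:ℝ) < t ^ (-(1/2) : ℝ) := Real.rpow_pos_of_pos ht _
  rw [h2]
  rw [show t ^ (-(1/2) : ℝ) / ((2:ℝ) ^ ((1:ℝ)/2))⁻¹ = t ^ (-(1/2) : ℝ) * (2:ℝ) ^ ((1:ℝ)/2) by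
    field_simp]
  nlinarith

lemma rpow_div_self (t : ℝ) (ht : 0 < t) : t ^ (-(1/2) : ℝ) / t = t ^ (-(3/2) : ℝ) := by
  nth_rewrite 2 [← Real.rpow_one t]
  rw [← Real.rpow_sub ht]; norm_num

noncomputable def hphiD (u : ℝ) : ℝ :=
  1 / 2 * (1 + u ^ 2) ^ (-(3 / 4) : ℝ) +
    1 / 2 * u * (-(3 / 4) * (1 + u ^ 2) ^ ((-(3 / 4) : ℝ) - 1) * (2 * u))

lemma hphi_hasDerivAt (u : ℝ) : HasDerivAt hphi (hphiD u) u := by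
  have h1 : HasDerivAt (fun v : ℝ => 1 / 2 * v) (1 / 2) u := by
    simpa using (hasDerivAt_id u).const_mul (1/2 : ℝ)
  have h2 : HasDerivAt (fun v : ℝ => 1 + v ^ 2) (2 * u) u := by
    simpa using ((hasDerivAt_pow 2 u).const_add 1)
  have h3 : HasDerivAt (fun v : ℝ => (1 + v ^ 2) ^ (-(3/4) : ℝ))
      (2 * u * (-(3/4) : ℝ) * (1 + u ^ 2) ^ ((-(3/4) : ℝ) - 1)) u :=
    h2.rpow_const (Or.inl (one_add_sq_pos u).ne')
  have := h1.mul h3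
  have e : hphiD u = 1 / 2 * (1 + u ^ 2) ^ (-(3/4) : ℝ)
      + 1 / 2 * u * (2 * u * (-(3/4) : ℝ) * (1 + u ^ 2) ^ ((-(3/4) : ℝ) - 1)) := by
    unfold hphiD; ring
  rw [e]; exact this

lemma hphiD_abs_le (u : ℝ) : |hphiD u| ≤ 5 / 4 := by
  have hp := one_add_sq_pos u
  have hA : (0:ℝ) < (1 + u ^ 2) ^ (-(3/4) : ℝ) := Real.rpow_pos_of_pos hp _
  have hA1 : (1 + u ^ 2) ^ (-(3/4) : ℝ) ≤ 1 :=
    Real.rpow_le_one_of_one_le_of_nonpos (by nlinarith) (by norm_num)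
  have hB : (0:ℝ) < (1 + u ^ 2) ^ ((-(3/4) : ℝ) - 1) := Real.rpow_pos_of_pos hp _
  have hAB : (1 + u ^ 2) * (1 + u ^ 2) ^ ((-(3/4) : ℝ) - 1) = (1 + u ^ 2) ^ (-(3/4) : ℝ) := by
    nth_rewrite 1 [← Real.rpow_one (1 + u ^ 2)]
    rw [← Real.rpow_add hp]
    norm_num
  have hu2 : u ^ 2 * (1 + u ^ 2) ^ ((-(3/4) : ℝ) - 1) ≤ (1 + u ^ 2) ^ (-(3/4) : ℝ) := by
    rw [← hAB]
    apply mul_le_mul_of_nonneg_right (by nlinarith) hB.le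
  have h1 : |hphiD u| ≤ 1 / 2 * (1 + u ^ 2) ^ (-(3/4) : ℝ)
      + 3 / 4 * (u ^ 2 * (1 + u ^ 2) ^ ((-(3/4) : ℝ) - 1)) := by
    refine (abs_add_le _ _).trans ?_
    rw [abs_of_pos (by positivity)]
    have : |1 / 2 * u * (-(3 / 4) * (1 + u ^ 2) ^ ((-(3 / 4) : ℝ) - 1) * (2 * u))|
        = 3 / 4 * (u ^ 2 * (1 + u ^ 2) ^ ((-(3/4) : ℝ) - 1)) := by
      rw [show 1 / 2 * u * (-(3 / 4) * (1 + u ^ 2) ^ ((-(3 / 4) : ℝ) - 1) * (2 * u))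
          = -(3 / 4 * (u ^ 2 * (1 + u ^ 2) ^ ((-(3/4) : ℝ) - 1))) by ring]
      rw [abs_neg, abs_of_nonneg (by positivity)]
    rw [this]
  nlinarith

lemma hphi_lip (a b : ℝ) : |hphi a - hphi b| ≤ 5 / 4 * |a - b| := by
  have := Convex.norm_image_sub_le_of_norm_hasDerivWithin_le
    (fun u (_ : u ∈ (Set.univ : Set ℝ)) => (hphi_hasDerivAt u).hasDerivWithinAt)
    (fun u _ => by simpa [Real.norm_eq_abs] using hphiD_abs_le u)
    convex_univ (Set.mem_univ b) (Set.mem_univ a)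
  simpa [Real.norm_eq_abs] using this

lemma hK_contOn {s : Set ℝ} (c : ℝ) (hs : ∀ t ∈ s, t ≠ 0) :
    ContinuousOn (fun t : ℝ => hphi (t + c) / t) s :=
  ((hphi_cont.comp (continuous_id.add continuous_const)).continuousOn).div
    continuousOn_id hs

lemma hK_integrableOn (c : ℝ) {ε : ℝ} (hε : 0 < ε) :
    IntegrableOn (fun t : ℝ => hphi (t + c) / t) (Set.Ioi ε) := by
  set T : ℝ := ε + 2 * |c| + 9 with hTdef
  have habs : (0:ℝ) ≤ |c| := abs_nonneg c
  have hT0 : 0 < T := by rw [hTdef]; linarith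
  have hεT : ε ≤ T := by rw [hTdef]; linarith
  rw [← Set.Ioc_union_Ioi_eq_Ioi hεT]
  apply IntegrableOn.union
  · have hmeas : AEStronglyMeasurable (fun t : ℝ => hphi (t + c) / t)
        (volume.restrict (Set.Ioc ε T)) :=
      (hK_contOn c (fun t ht => (lt_of_lt_of_le hε ht.1.le).ne')).aestronglyMeasurable
        measurableSet_Ioc
    apply Integrable.mono' (g := fun _ : ℝ => 1 / 2 * ε⁻¹)
      (integrableOn_const measure_Ioc_lt_top.ne) hmeas
    filter_upwards [ae_restrict_mem measurableSet_Ioc] with t ht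
    have ht0 : 0 < t := lt_trans hε ht.1
    rw [Real.norm_eq_abs, abs_div, abs_of_pos ht0]
    rw [div_eq_mul_inv]
    apply mul_le_mul (hphi_abs_le_half _) _ (by positivity) (by norm_num)
    exact inv_anti₀ hε ht.1.le
  · have hmeas : AEStronglyMeasurable (fun t : ℝ => hphi (t + c) / t)
        (volume.restrict (Set.Ioi T)) :=
      (hK_contOn c (fun t ht => (lt_trans hT0 ht).ne')).aestronglyMeasurable
        measurableSet_Ioi
    apply Integrable.mono'
      (integrableOn_Ioi_rpow_of_lt (show (-(3/2):ℝ) < -1 by norm_num) hT0) hmeas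
    filter_upwards [ae_restrict_mem measurableSet_Ioi] with t ht
    have htT : T < t := ht
    have ht0 : 0 < t := lt_trans hT0 htT
    have htc : t / 2 ≤ |t + c| := by
      have h1 : t + c ≤ |t + c| := le_abs_self _
      have h2 : -|c| ≤ c := neg_abs_le c
      have h3 : 2 * |c| ≤ t := by rw [hTdef] at htT; linarith
      linarith
    have h1 : |hphi (t + c)| ≤ 1 / 2 * (t / 2) ^ (-(1/2) : ℝ) :=
      hphi_abs_le_rpow (by linarith) htc
    have h2 := half_rpow_half t ht0
    rw [Real.norm_eq_abs, abs_div, abs_of_pos ht0]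
    calc |hphi (t + c)| / t ≤ t ^ (-(1/2) : ℝ) / t := by
          apply div_le_div_of_nonneg_right (h1.trans h2) ht0.le
      _ = t ^ (-(3/2) : ℝ) := rpow_div_self t ht0


lemma hh_contOn (x : ℝ) {s : Set ℝ} (hs : ∀ t ∈ s, t ≠ 0) :
    ContinuousOn (fun t : ℝ => (hphi (x - t) - hphi (x + t)) / t) s :=
  (((hphi_cont.comp (continuous_const.sub continuous_id)).sub
      (hphi_cont.comp (continuous_const.add continuous_id))).continuousOn).div
    continuousOn_id hs

lemma hh_bound1 (x t : ℝ) (ht : 0 < t) :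
    |(hphi (x - t) - hphi (x + t)) / t| ≤ 5 / 2 := by
  rw [abs_div, abs_of_pos ht]
  have h1 : |hphi (x - t) - hphi (x + t)| ≤ 5 / 4 * |x - t - (x + t)| := hphi_lip _ _
  have h2 : |x - t - (x + t)| = 2 * t := by
    rw [show x - t - (x + t) = -(2 * t) by ring, abs_neg, abs_of_pos (by linarith)]
  rw [h2] at h1
  rw [div_le_iff₀ ht]
  linarith

lemma hh_bound2 (x t : ℝ) (ht : 0 < t) (h1 : t ≤ |x - t|) (h2 : t ≤ |x + t|) :
    |(hphi (x - t) - hphi (x + t)) / t| ≤ t ^ (-(3/2) : ℝ) := by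
  rw [abs_div, abs_of_pos ht]
  have b1 : |hphi (x - t)| ≤ 1 / 2 * t ^ (-(1/2) : ℝ) := hphi_abs_le_rpow ht h1
  have b2 : |hphi (x + t)| ≤ 1 / 2 * t ^ (-(1/2) : ℝ) := hphi_abs_le_rpow ht h2
  have b3 : |hphi (x - t) - hphi (x + t)| ≤ t ^ (-(1/2) : ℝ) := by
    calc |hphi (x - t) - hphi (x + t)| ≤ |hphi (x - t)| + |hphi (x + t)| := abs_sub _ _
      _ ≤ t ^ (-(1/2) : ℝ) := by linarith
  calc |hphi (x - t) - hphi (x + t)| / t ≤ t ^ (-(1/2) : ℝ) / t :=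
        div_le_div_of_nonneg_right b3 ht.le
    _ = t ^ (-(3/2) : ℝ) := rpow_div_self t ht

lemma hh_bound3 (x t : ℝ) (ht : 0 < t) (h1 : t / 2 ≤ |x - t|) (h2 : t / 2 ≤ |x + t|) :
    |(hphi (x - t) - hphi (x + t)) / t| ≤ 2 * t ^ (-(3/2) : ℝ) := by
  rw [abs_div, abs_of_pos ht]
  have ht2 : 0 < t / 2 := by linarith
  have hr := half_rpow_half t ht
  have b1 : |hphi (x - t)| ≤ t ^ (-(1/2) : ℝ) := (hphi_abs_le_rpow ht2 h1).trans hr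
  have b2 : |hphi (x + t)| ≤ t ^ (-(1/2) : ℝ) := (hphi_abs_le_rpow ht2 h2).trans hr
  have b3 : |hphi (x - t) - hphi (x + t)| ≤ 2 * t ^ (-(1/2) : ℝ) := by
    calc |hphi (x - t) - hphi (x + t)| ≤ |hphi (x - t)| + |hphi (x + t)| := abs_sub _ _
      _ ≤ 2 * t ^ (-(1/2) : ℝ) := by linarith
  calc |hphi (x - t) - hphi (x + t)| / t ≤ 2 * t ^ (-(1/2) : ℝ) / t :=
        div_le_div_of_nonneg_right b3 ht.le
    _ = 2 * (t ^ (-(1/2) : ℝ) / t) := by ring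
    _ = 2 * t ^ (-(3/2) : ℝ) := by rw [rpow_div_self t ht]

lemma hh_bound4 (x t : ℝ) (ht : 0 < t) :
    |(hphi (x - t) - hphi (x + t)) / t| ≤ 1 / t := by
  rw [abs_div, abs_of_pos ht]
  apply div_le_div_of_nonneg_right _ ht.le
  calc |hphi (x - t) - hphi (x + t)| ≤ |hphi (x - t)| + |hphi (x + t)| := abs_sub _ _
    _ ≤ 1 := by linarith [hphi_abs_le_half (x - t), hphi_abs_le_half (x + t)]

lemma hh_eq (x : ℝ) : (fun t : ℝ => (hphi (x - t) - hphi (x + t)) / t)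
    = fun t : ℝ => -(hphi (t + -x) / t) - hphi (t + x) / t := by
  funext t
  rw [show x - t = -(t + -x) by ring, hphi_odd, show x + t = t + x by ring]
  rw [sub_div, neg_div]

lemma hh_integrableOn_Ioi (x : ℝ) {ε : ℝ} (hε : 0 < ε) :
    IntegrableOn (fun t : ℝ => (hphi (x - t) - hphi (x + t)) / t) (Set.Ioi ε) := by
  rw [hh_eq]
  exact ((hK_integrableOn (-x) hε).neg.sub (hK_integrableOn x hε))

lemma hh_integrableOn_Ioc (x : ℝ) (b : ℝ) :
    IntegrableOn (fun t : ℝ => (hphi (x - t) - hphi (x + t)) / t) (Set.Ioc 0 b) := by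
  have hmeas : AEStronglyMeasurable (fun t : ℝ => (hphi (x - t) - hphi (x + t)) / t)
      (volume.restrict (Set.Ioc 0 b)) :=
    (hh_contOn x (fun t ht => ht.1.ne')).aestronglyMeasurable measurableSet_Ioc
  apply Integrable.mono' (g := fun _ : ℝ => (5 / 2 : ℝ))
    (integrableOn_const measure_Ioc_lt_top.ne) hmeas
  filter_upwards [ae_restrict_mem measurableSet_Ioc] with t ht
  rw [Real.norm_eq_abs]
  exact hh_bound1 x t ht.1


lemma key_eq (x : ℝ) {ε : ℝ} (hε : 0 < ε) :
    (∫ t in {t : ℝ | ε ≤ |t|}, hphi (x - t) / t)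
      = ∫ t in Set.Ioi ε, (hphi (x - t) - hphi (x + t)) / t := by
  have hset : {t : ℝ | ε ≤ |t|} = Set.Iic (-ε) ∪ Set.Ici ε := by
    ext t
    simp only [Set.mem_setOf_eq, Set.mem_union, Set.mem_Iic, Set.mem_Ici, le_abs]
    constructor
    · rintro (h | h)
      · exact Or.inr h
      · exact Or.inl (by linarith)
    · rintro (h | h)
      · exact Or.inr (by linarith)
      · exact Or.inl h
  have hgIoi : IntegrableOn (fun t : ℝ => hphi (x - t) / t) (Set.Ioi ε) := by
    have he : (fun t : ℝ => hphi (x - t) / t) = fun t => -(hphi (t + -x) / t) := by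
      funext t
      rw [show x - t = -(t + -x) by ring, hphi_odd, neg_div]
    rw [he]; exact (hK_integrableOn (-x) hε).neg
  have hgIci : IntegrableOn (fun t : ℝ => hphi (x - t) / t) (Set.Ici ε) := by
    rw [integrableOn_Ici_iff_integrableOn_Ioi]; exact hgIoi
  have hgneg : IntegrableOn (fun t : ℝ => hphi (x - -t) / -t) (Set.Ioi ε) := by
    have he : (fun t : ℝ => hphi (x - -t) / -t) = fun t => -(hphi (t + x) / t) := by
      funext t
      rw [show x - -t = t + x by ring, div_neg]
    rw [he]; exact (hK_integrableOn x hε).neg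
  have hgIic : IntegrableOn (fun t : ℝ => hphi (x - t) / t) (Set.Iic (-ε)) := by
    rw [← (MeasurePreserving.integrableOn_comp_preimage
        (Measure.measurePreserving_neg (volume : Measure ℝ))
        (Homeomorph.neg ℝ).measurableEmbedding)]
    simp only [Function.comp_def, neg_preimage, neg_Iic, neg_neg]
    rw [integrableOn_Ici_iff_integrableOn_Ioi]
    exact hgneg
  rw [hset, setIntegral_union (Set.Iic_disjoint_Ici.2 (by intro h; linarith))
    measurableSet_Ici hgIic hgIci, integral_Ici_eq_integral_Ioi]
  have hneg : (∫ t in Set.Iic (-ε), hphi (x - t) / t)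
      = ∫ t in Set.Ioi ε, hphi (x - -t) / -t := by
    have h := integral_comp_neg_Iic (-ε) (fun t : ℝ => hphi (x - -t) / -t)
    simp only [neg_neg] at h
    exact h
  rw [hneg, ← integral_add hgneg hgIoi]
  apply setIntegral_congr_fun measurableSet_Ioi
  intro t ht
  dsimp only
  rw [show x - -t = x + t by ring, div_neg, sub_div]
  ring



/-- Let `f(x) = ⟨x⟩^{1/2} = (1+x²)^{1/4}`, so `f'(x) = (1/2) x ⟨x⟩^{-3/2}`.
Then the Hilbert transform `H₀(f')(x)`, given by the principal value
`(1/π) lim_{ε→0⁺} ∫_{|t|≥ε} f'(x-t)/t dt`, exists at every `x` and `‖H₀(f')‖_{L^∞} ≤ 20`. -/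
theorem hilbert_of_japanese_bracket_half_deriv_bound (x : ℝ) :
    ∃ L : ℝ,
      Tendsto
        (fun ε : ℝ =>
          (1 / Real.pi) * ∫ t in {t : ℝ | ε ≤ |t|},
            ((1 / 2) * (x - t) * (1 + (x - t) ^ 2) ^ (-(3 / 4) : ℝ)) / t)
        (nhdsWithin 0 (Set.Ioi 0)) (nhds L) ∧ |L| ≤ 20 := by
  suffices h : ∃ L : ℝ,
      Tendsto
        (fun ε : ℝ => (1 / Real.pi) * ∫ t in {t : ℝ | ε ≤ |t|}, hphi (x - t) / t)
        (nhdsWithin 0 (Set.Ioi 0)) (nhds L) ∧ |L| ≤ 20 by exact h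
  have habs : (0:ℝ) ≤ |x| := abs_nonneg x
  set T1 : ℝ := max 1 (|x| / 2) with hT1def
  set T2 : ℝ := max 9 (2 * |x|) with hT2def
  have hT1_1 : (1:ℝ) ≤ T1 := le_max_left _ _
  have hT1pos : (0:ℝ) < T1 := by linarith
  have hT2_9 : (9:ℝ) ≤ T2 := le_max_left _ _
  have hT2x : 2 * |x| ≤ T2 := le_max_right _ _
  have hT2pos : (0:ℝ) < T2 := by linarith
  have hT1T2 : T1 ≤ T2 := by
    apply max_le (by linarith)
    refine le_trans ?_ hT2x
    linarith
  have hT2_le : T2 ≤ 9 * T1 := by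
    apply max_le (by linarith)
    rcases le_total (|x|) 2 with h | h
    · linarith
    · have h2 : |x| / 2 ≤ T1 := le_max_right _ _
      linarith
  have hhIoi : ∀ ε : ℝ, 0 < ε →
      IntegrableOn (fun t : ℝ => (hphi (x - t) - hphi (x + t)) / t) (Set.Ioi ε) :=
    fun ε hε => hh_integrableOn_Ioi x hε
  set I : ℝ := ∫ t in Set.Ioi (0:ℝ), (hphi (x - t) - hphi (x + t)) / t with hIdef
  refine ⟨1 / Real.pi * I, ?_, ?_⟩
  · -- Tendsto part
    have est : ∀ ε : ℝ, 0 < ε →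
        |(∫ t in Set.Ioi ε, (hphi (x - t) - hphi (x + t)) / t) - I| ≤ 5 / 2 * ε := by
      intro ε hε
      have hsplit : I = (∫ t in Set.Ioc 0 ε, (hphi (x - t) - hphi (x + t)) / t)
          + ∫ t in Set.Ioi ε, (hphi (x - t) - hphi (x + t)) / t := by
        rw [hIdef, ← Set.Ioc_union_Ioi_eq_Ioi hε.le]
        exact setIntegral_union Set.Ioc_disjoint_Ioi_same measurableSet_Ioi
          (hh_integrableOn_Ioc x ε) (hhIoi ε hε)
      have habs2 : (∫ t in Set.Ioi ε, (hphi (x - t) - hphi (x + t)) / t) - I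
          = -(∫ t in Set.Ioc 0 ε, (hphi (x - t) - hphi (x + t)) / t) := by
        rw [hsplit]; ring
      rw [habs2, abs_neg]
      have hb := norm_setIntegral_le_of_norm_le_const (μ := volume)
        (s := Set.Ioc (0:ℝ) ε) (C := 5/2)
        (measure_Ioc_lt_top)
        (fun t ht => by rw [Real.norm_eq_abs]; exact hh_bound1 x t ht.1)
      rw [Real.norm_eq_abs, measureReal_def, Real.volume_Ioc,
        ENNReal.toReal_ofReal (by linarith : (0:ℝ) ≤ ε - 0)] at hb
      calc |∫ t in Set.Ioc 0 ε, (hphi (x - t) - hphi (x + t)) / t| ≤ 5/2 * (ε - 0) := hb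
        _ = 5/2 * ε := by ring
    have t1 : Tendsto (fun ε : ℝ => ∫ t in Set.Ioi ε, (hphi (x - t) - hphi (x + t)) / t)
        (nhdsWithin 0 (Set.Ioi 0)) (nhds I) := by
      rw [tendsto_iff_dist_tendsto_zero]
      have h0 : ∀ᶠ ε : ℝ in nhdsWithin 0 (Set.Ioi 0),
          0 ≤ dist (∫ t in Set.Ioi ε, (hphi (x - t) - hphi (x + t)) / t) I :=
        Eventually.of_forall (fun ε => dist_nonneg)
      have h1 : ∀ᶠ ε : ℝ in nhdsWithin 0 (Set.Ioi 0),
          dist (∫ t in Set.Ioi ε, (hphi (x - t) - hphi (x + t)) / t) I ≤ 5 / 2 * ε := by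
        filter_upwards [self_mem_nhdsWithin] with ε hε
        rw [Real.dist_eq]
        exact est ε hε
      have h2 : Tendsto (fun ε : ℝ => 5 / 2 * ε) (nhdsWithin 0 (Set.Ioi 0)) (nhds 0) := by
        have hc : Tendsto (fun ε : ℝ => 5 / 2 * ε) (nhds 0) (nhds (5 / 2 * 0)) :=
          (continuous_const.mul continuous_id).tendsto (0:ℝ)
        rw [mul_zero] at hc
        exact hc.mono_left nhdsWithin_le_nhds
      exact squeeze_zero' h0 h1 h2
    have t2 := t1.const_mul (1 / Real.pi)
    apply t2.congr'
    filter_upwards [self_mem_nhdsWithin] with ε hε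
    rw [← key_eq x hε]
  · -- bound part
    have hnorm : |I| ≤ ∫ t in Set.Ioi (0:ℝ), ‖(hphi (x - t) - hphi (x + t)) / t‖ := by
      rw [hIdef, ← Real.norm_eq_abs]
      exact norm_integral_le_integral_norm _
    have hrpow1 : IntegrableOn (fun t : ℝ => t ^ (-(3/2) : ℝ)) (Set.Ioi 1) :=
      integrableOn_Ioi_rpow_of_lt (by norm_num) one_pos
    have hrpow9 : IntegrableOn (fun t : ℝ => t ^ (-(3/2) : ℝ)) (Set.Ioi 9) :=
      integrableOn_Ioi_rpow_of_lt (by norm_num) (by norm_num)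
    have hrpowT2 : IntegrableOn (fun t : ℝ => t ^ (-(3/2) : ℝ)) (Set.Ioi T2) :=
      integrableOn_Ioi_rpow_of_lt (by norm_num) hT2pos
    have e1 : (∫ t in Set.Ioi (0:ℝ), ‖(hphi (x - t) - hphi (x + t)) / t‖)
        = (∫ t in Set.Ioc (0:ℝ) 1, ‖(hphi (x - t) - hphi (x + t)) / t‖)
          + ∫ t in Set.Ioi (1:ℝ), ‖(hphi (x - t) - hphi (x + t)) / t‖ := by
      rw [← Set.Ioc_union_Ioi_eq_Ioi (zero_le_one : (0:ℝ) ≤ 1)]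
      exact setIntegral_union Set.Ioc_disjoint_Ioi_same measurableSet_Ioi
        (hh_integrableOn_Ioc x 1).norm (hhIoi 1 one_pos).norm
    have e2 : (∫ t in Set.Ioi (1:ℝ), ‖(hphi (x - t) - hphi (x + t)) / t‖)
        = (∫ t in Set.Ioc (1:ℝ) T1, ‖(hphi (x - t) - hphi (x + t)) / t‖)
          + ∫ t in Set.Ioi T1, ‖(hphi (x - t) - hphi (x + t)) / t‖ := by
      rw [← Set.Ioc_union_Ioi_eq_Ioi hT1_1]
      exact setIntegral_union Set.Ioc_disjoint_Ioi_same measurableSet_Ioi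
        (((hhIoi 1 one_pos).mono_set Set.Ioc_subset_Ioi_self).norm)
        (hhIoi T1 hT1pos).norm
    have e3 : (∫ t in Set.Ioi T1, ‖(hphi (x - t) - hphi (x + t)) / t‖)
        = (∫ t in Set.Ioc T1 T2, ‖(hphi (x - t) - hphi (x + t)) / t‖)
          + ∫ t in Set.Ioi T2, ‖(hphi (x - t) - hphi (x + t)) / t‖ := by
      rw [← Set.Ioc_union_Ioi_eq_Ioi hT1T2]
      exact setIntegral_union Set.Ioc_disjoint_Ioi_same measurableSet_Ioi
        (((hhIoi T1 hT1pos).mono_set Set.Ioc_subset_Ioi_self).norm)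
        (hhIoi T2 hT2pos).norm
    have P1 : (∫ t in Set.Ioc (0:ℝ) 1, ‖(hphi (x - t) - hphi (x + t)) / t‖) ≤ 5/2 := by
      calc (∫ t in Set.Ioc (0:ℝ) 1, ‖(hphi (x - t) - hphi (x + t)) / t‖)
          ≤ ∫ _ in Set.Ioc (0:ℝ) 1, (5/2 : ℝ) := by
            apply setIntegral_mono_on (hh_integrableOn_Ioc x 1).norm
              (integrableOn_const measure_Ioc_lt_top.ne) measurableSet_Ioc
            intro t ht
            rw [Real.norm_eq_abs]
            exact hh_bound1 x t ht.1
        _ = 5/2 := by simp [Real.volume_Ioc]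
    have P2 : (∫ t in Set.Ioc (1:ℝ) T1, ‖(hphi (x - t) - hphi (x + t)) / t‖) ≤ 2 := by
      calc (∫ t in Set.Ioc (1:ℝ) T1, ‖(hphi (x - t) - hphi (x + t)) / t‖)
          ≤ ∫ t in Set.Ioc (1:ℝ) T1, t ^ (-(3/2) : ℝ) := by
            apply setIntegral_mono_on (((hhIoi 1 one_pos).mono_set Set.Ioc_subset_Ioi_self).norm)
              (hrpow1.mono_set Set.Ioc_subset_Ioi_self) measurableSet_Ioc
            intro t ht
            have ht0 : (0:ℝ) < t := lt_trans one_pos ht.1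
            have hx2 : 2 * t ≤ |x| := by
              have h' : t ≤ |x| / 2 := by
                rcases le_max_iff.mp ht.2 with h | h
                · linarith [ht.1]
                · exact h
              linarith
            have h1 : t ≤ |x - t| := by
              have := abs_sub_abs_le_abs_sub x t
              rw [abs_of_pos ht0] at this
              linarith
            have h2 : t ≤ |x + t| := by
              have h3 := abs_sub_abs_le_abs_sub x (-t)
              rw [abs_neg, sub_neg_eq_add, abs_of_pos ht0] at h3
              linarith
            rw [Real.norm_eq_abs]
            exact hh_bound2 x t ht0 h1 h2
        _ ≤ ∫ t in Set.Ioi (1:ℝ), t ^ (-(3/2) : ℝ) := by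
            apply setIntegral_mono_set hrpow1
            · filter_upwards [ae_restrict_mem measurableSet_Ioi] with t ht
              exact Real.rpow_nonneg (le_of_lt (lt_trans one_pos ht)) _
            · exact HasSubset.Subset.eventuallyLE Set.Ioc_subset_Ioi_self
        _ = 2 := by
            rw [integral_Ioi_rpow_of_lt (by norm_num) one_pos]
            norm_num
    have P3 : (∫ t in Set.Ioc T1 T2, ‖(hphi (x - t) - hphi (x + t)) / t‖) ≤ 8 := by
      calc (∫ t in Set.Ioc T1 T2, ‖(hphi (x - t) - hphi (x + t)) / t‖)
          ≤ ∫ _ in Set.Ioc T1 T2, (1 / T1 : ℝ) := by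
            apply setIntegral_mono_on (((hhIoi T1 hT1pos).mono_set Set.Ioc_subset_Ioi_self).norm)
              (integrableOn_const measure_Ioc_lt_top.ne) measurableSet_Ioc
            intro t ht
            have ht0 : (0:ℝ) < t := lt_trans hT1pos ht.1
            rw [Real.norm_eq_abs]
            refine le_trans (hh_bound4 x t ht0) ?_
            exact one_div_le_one_div_of_le hT1pos ht.1.le
        _ = (T2 - T1) * (1 / T1) := by
            rw [setIntegral_const, measureReal_def, Real.volume_Ioc, ENNReal.toReal_ofReal (by linarith)]
            rw [smul_eq_mul]
        _ ≤ 8 := by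
            rw [mul_one_div, div_le_iff₀ hT1pos]
            linarith
    have P4 : (∫ t in Set.Ioi T2, ‖(hphi (x - t) - hphi (x + t)) / t‖) ≤ 4/3 := by
      calc (∫ t in Set.Ioi T2, ‖(hphi (x - t) - hphi (x + t)) / t‖)
          ≤ ∫ t in Set.Ioi T2, 2 * t ^ (-(3/2) : ℝ) := by
            apply setIntegral_mono_on (hhIoi T2 hT2pos).norm
              (hrpowT2.const_mul 2) measurableSet_Ioi
            intro t ht
            have ht0 : (0:ℝ) < t := lt_trans hT2pos ht
            have hxt : |x| ≤ t / 2 := by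
              have : 2 * |x| ≤ t := le_trans hT2x (le_of_lt ht)
              linarith
            have h1 : t / 2 ≤ |x - t| := by
              have h3 : |t| - |x| ≤ |t - x| := abs_sub_abs_le_abs_sub t x
              rw [abs_of_pos ht0, abs_sub_comm] at h3
              linarith
            have h2 : t / 2 ≤ |x + t| := by
              have h4 := abs_sub_abs_le_abs_sub t (-x)
              rw [abs_neg, sub_neg_eq_add, add_comm, abs_of_pos ht0] at h4
              linarith
            rw [Real.norm_eq_abs]
            exact hh_bound3 x t ht0 h1 h2
        _ ≤ ∫ t in Set.Ioi (9:ℝ), 2 * t ^ (-(3/2) : ℝ) := by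
            apply setIntegral_mono_set (hrpow9.const_mul 2)
            · filter_upwards [ae_restrict_mem measurableSet_Ioi] with t ht
              have ht0 : (0:ℝ) < t := lt_trans (by norm_num) ht
              positivity
            · exact HasSubset.Subset.eventuallyLE (Set.Ioi_subset_Ioi hT2_9)
        _ = 4/3 := by
            rw [integral_const_mul, integral_Ioi_rpow_of_lt (by norm_num) (by norm_num : (0:ℝ) < 9)]
            rw [show (-(3/2) : ℝ) + 1 = -(1/2) by norm_num]
            have h9 : (9:ℝ) ^ (-(1/2) : ℝ) = 1/3 := by
              rw [show (9:ℝ) = 3 ^ (2:ℕ) by norm_num, ← Real.rpow_natCast 3 2,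
                ← Real.rpow_mul (by norm_num : (0:ℝ) ≤ 3),
                show ((2:ℕ) : ℝ) * (-(1/2) : ℝ) = -1 by norm_num]
              rw [Real.rpow_neg_one]
              norm_num
            rw [h9]
            norm_num
    have hItotal : |I| ≤ 83/6 := by
      rw [e1, e2, e3] at hnorm
      linarith
    have hπ : (3:ℝ) < Real.pi := Real.pi_gt_three
    rw [abs_mul, abs_of_pos (by positivity : (0:ℝ) < 1 / Real.pi)]
    calc 1 / Real.pi * |I| ≤ 1/3 * (83/6) := by
          apply mul_le_mul _ hItotal (abs_nonneg I) (by norm_num)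
          apply one_div_le_one_div_of_le (by norm_num)
          linarith
      _ ≤ 20 := by norm_num

end HilbertAux
end
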